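/- For an integer n ≥ 0 and a ∈ ℝ, let A_n(a) = ∫₀^{2π} e^{a cos u} cos(nu) du. Then: (i) for every n ≥ 0 and every a ∈ ℝ, A_n(a) = 2π Σ_{k=0}^∞ (a/2)^{2k+n} / (k! (k+n)!), i.e. A_n(a) equals 2π times the modified Bessel function I_n(a); (ii) for every n ≥ 1 and every a with 0 ≤ a ≤ √n, one has (2π/n!) (a/2)^n ≤ A_n(a) ≤ (2π/n!) (a/2)^n (1 + a²/(2n)). (Paper's Lemma D.1, with the uniform error bound made explicit.) -/

import Mathlib

open MeasureTheory intervalIntegral Finset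

noncomputable section

/-- `A_n(a) = ∫₀^{2π} e^{a cos u} cos(nu) du`. -/
def Afun (n : ℕ) (a : ℝ) : ℝ :=
  ∫ u in (0 : ℝ)..(2 * Real.pi), Real.exp (a * Real.cos u) * Real.cos (n * u)


lemma Ezero (k : ℤ) :
    (∫ u in (0:ℝ)..(2 * Real.pi), Complex.exp (k * Complex.I * u)) =
      if k = 0 then (2 * Real.pi : ℂ) else 0 := by
  rcases eq_or_ne k 0 with hk | hk
  · simp [hk]
  · rw [if_neg hk, integral_exp_mul_complex (by simp [hk, Complex.I_ne_zero])]
    have h1 : Complex.exp ((k : ℂ) * Complex.I * (2 * Real.pi)) = 1 := by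
      rw [show (k : ℂ) * Complex.I * (2 * Real.pi) = k * (2 * Real.pi * Complex.I) by ring]
      exact Complex.exp_int_mul_two_pi_mul_I k
    simp [h1]


lemma cos_pow_expand (m n : ℕ) (u : ℝ) :
    Complex.cos u ^ m * Complex.cos (n * u) =
      ∑ j ∈ Finset.range (m + 1), (m.choose j : ℂ) / 2 ^ (m + 1) *
        (Complex.exp ((2 * j - m + n : ℤ) * Complex.I * u) +
         Complex.exp ((2 * j - m - n : ℤ) * Complex.I * u)) := by
  have hc : ∀ x : ℂ, Complex.cos x = (Complex.exp (x * Complex.I) + Complex.exp (-x * Complex.I)) / 2 := by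
    intro x; rw [eq_div_iff (two_ne_zero), mul_comm _ (2:ℂ), Complex.two_cos]
  rw [hc, hc, div_pow, add_pow]
  rw [div_mul_div_comm, Finset.sum_mul, Finset.sum_div]
  refine Finset.sum_congr rfl fun j hj => ?_
  have hj' : j ≤ m := Nat.lt_succ_iff.mp (Finset.mem_range.mp hj)
  rw [← Complex.exp_nat_mul, ← Complex.exp_nat_mul, ← Complex.exp_add]
  have e1 : (j : ℂ) * ((u : ℂ) * Complex.I) + (m - j : ℕ) * (-(u : ℂ) * Complex.I)
      = ((2 * j - m : ℤ) * Complex.I * u) := by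
    push_cast [Nat.cast_sub hj']
    ring
  rw [e1]
  have f1 : Complex.exp ((2 * j - m + n : ℤ) * Complex.I * u)
      = Complex.exp ((2 * j - m : ℤ) * Complex.I * u) * Complex.exp ((n : ℂ) * u * Complex.I) := by
    rw [← Complex.exp_add]; congr 1; push_cast; ring
  have f2 : Complex.exp ((2 * j - m - n : ℤ) * Complex.I * u)
      = Complex.exp ((2 * j - m : ℤ) * Complex.I * u) * Complex.exp (-((n : ℂ) * u) * Complex.I) := by
    rw [← Complex.exp_add]; congr 1; push_cast; ring
  rw [f1, f2]
  ring

lemma master (m n : ℕ) :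
    (∫ u in (0:ℝ)..(2 * Real.pi), Real.cos u ^ m * Real.cos (n * u)) =
      ∑ j ∈ Finset.range (m + 1), (m.choose j : ℝ) / 2 ^ (m + 1) *
        ((if (2 * j - m + n : ℤ) = 0 then 2 * Real.pi else 0) +
         (if (2 * j - m - n : ℤ) = 0 then 2 * Real.pi else 0)) := by
  have key : ((∫ u in (0:ℝ)..(2 * Real.pi), Real.cos u ^ m * Real.cos (n * u) : ℝ) : ℂ)
      = ((∑ j ∈ Finset.range (m + 1), (m.choose j : ℝ) / 2 ^ (m + 1) *
        ((if (2 * j - m + n : ℤ) = 0 then 2 * Real.pi else 0) +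
         (if (2 * j - m - n : ℤ) = 0 then 2 * Real.pi else 0)) : ℝ) : ℂ) := by
    rw [← intervalIntegral.integral_ofReal]
    have : ∀ u : ℝ, ((Real.cos u ^ m * Real.cos (n * u) : ℝ) : ℂ)
        = ∑ j ∈ Finset.range (m + 1), (m.choose j : ℂ) / 2 ^ (m + 1) *
        (Complex.exp ((2 * j - m + n : ℤ) * Complex.I * u) +
         Complex.exp ((2 * j - m - n : ℤ) * Complex.I * u)) := by
      intro u
      rw [← cos_pow_expand m n u]
      push_cast [Complex.ofReal_cos]
      norm_cast
    simp_rw [this]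
    rw [intervalIntegral.integral_finset_sum]
    · trans (∑ j ∈ Finset.range (m + 1), (m.choose j : ℂ) / 2 ^ (m + 1) *
        ((if ((2 * j - m + n : ℤ)) = 0 then (2 * Real.pi : ℂ) else 0) +
         (if ((2 * j - m - n : ℤ)) = 0 then (2 * Real.pi : ℂ) else 0)))
      · refine Finset.sum_congr rfl fun j _ => ?_
        rw [intervalIntegral.integral_const_mul, intervalIntegral.integral_add, Ezero, Ezero]
        · exact intervalIntegrable_iff.mpr <| (Continuous.integrableOn_Ioc (by fun_prop))
        · exact intervalIntegrable_iff.mpr <| (Continuous.integrableOn_Ioc (by fun_prop))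
      · push_cast [apply_ite ((↑) : ℝ → ℂ)]
        refine Finset.sum_congr rfl fun j _ => ?_
        by_cases h1 : ((2 * j - m + n : ℤ)) = 0 <;> by_cases h2 : ((2 * j - m - n : ℤ)) = 0 <;>
          simp only [h1, h2, if_true, if_false] <;> push_cast <;> ring
    · intro j _
      exact intervalIntegrable_iff.mpr <| (Continuous.integrableOn_Ioc (by fun_prop))
  exact_mod_cast key

lemma cInt_eq (n k : ℕ) :
    (∫ u in (0:ℝ)..(2 * Real.pi), Real.cos u ^ (2 * k + n) * Real.cos (n * u)) =
      2 * Real.pi * ((2 * k + n).choose k : ℝ) / 2 ^ (2 * k + n) := by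
  set m := 2 * k + n with hm
  rw [master]
  have h1 : ∀ j ∈ Finset.range (m + 1), (m.choose j : ℝ) / 2 ^ (m + 1) *
        ((if (2 * j - m + n : ℤ) = 0 then 2 * Real.pi else 0) +
         (if (2 * j - m - n : ℤ) = 0 then 2 * Real.pi else 0))
      = (if j = k then (m.choose j : ℝ) / 2 ^ (m + 1) * (2 * Real.pi) else 0)
        + (if j = k + n then (m.choose j : ℝ) / 2 ^ (m + 1) * (2 * Real.pi) else 0) := by
    intro j _
    have e1 : ((2 * j - m + n : ℤ) = 0) ↔ j = k := by omega
    have e2 : ((2 * j - m - n : ℤ) = 0) ↔ j = k + n := by omega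
    rw [if_congr e1 rfl rfl, if_congr e2 rfl rfl]
    by_cases h1 : j = k <;> by_cases h2 : j = k + n <;> simp [h1, h2] <;> split_ifs <;> ring
  rw [Finset.sum_congr rfl h1, Finset.sum_add_distrib,
    Finset.sum_ite_eq' _ k, Finset.sum_ite_eq' _ (k + n),
    if_pos (Finset.mem_range.mpr (by omega)), if_pos (Finset.mem_range.mpr (by omega))]
  have hsymm : m.choose (k + n) = m.choose k := by
    rw [← Nat.choose_symm (by omega : k + n ≤ m)]
    congr 1; omega
  rw [hsymm]
  rw [pow_succ]
  ring

lemma cInt_zero (m n : ℕ) (h : ∀ k, m ≠ 2 * k + n) :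
    (∫ u in (0:ℝ)..(2 * Real.pi), Real.cos u ^ m * Real.cos (n * u)) = 0 := by
  rw [master]
  refine Finset.sum_eq_zero fun j hj => ?_
  have hj' : j ≤ m := Nat.lt_succ_iff.mp (Finset.mem_range.mp hj)
  have e1 : ¬ ((2 * j - m + n : ℤ) = 0) := by
    intro hc; exact h j (by omega)
  have e2 : ¬ ((2 * j - m - n : ℤ) = 0) := by
    intro hc
    have hjn : n ≤ j := by omega
    exact h (j - n) (by omega)
  rw [if_neg e1, if_neg e2]
  simp

lemma real_exp_tsum (x : ℝ) : Real.exp x = ∑' m : ℕ, x ^ m / m.factorial := by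
  rw [Real.exp_eq_exp_ℝ, NormedSpace.exp_eq_tsum_div]

lemma Afun_swap (n : ℕ) (a : ℝ) :
    (∫ u in (0:ℝ)..(2 * Real.pi), Real.exp (a * Real.cos u) * Real.cos (n * u)) =
      ∑' m : ℕ, (a ^ m / m.factorial) *
        ∫ u in (0:ℝ)..(2 * Real.pi), Real.cos u ^ m * Real.cos (n * u) := by
  have h2pi : (0:ℝ) ≤ 2 * Real.pi := by positivity
  have hpt : ∀ u : ℝ, Real.exp (a * Real.cos u) * Real.cos (n * u)
      = ∑' m : ℕ, (a ^ m / m.factorial) * (Real.cos u ^ m * Real.cos (n * u)) := by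
    intro u
    rw [real_exp_tsum, ← tsum_mul_right]
    congr 1 with m
    rw [mul_pow]
    ring
  simp_rw [hpt]
  rw [intervalIntegral.integral_of_le h2pi]
  rw [MeasureTheory.integral_tsum]
  · refine tsum_congr fun m => ?_
    rw [← intervalIntegral.integral_of_le h2pi, intervalIntegral.integral_const_mul]
  · exact fun m => (Continuous.aestronglyMeasurable (by fun_prop))
  · have hb : ∀ m : ℕ, (∫⁻ u in Set.Ioc (0:ℝ) (2 * Real.pi),
        ‖(a ^ m / m.factorial) * (Real.cos u ^ m * Real.cos (n * u))‖₊) ≤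
        ENNReal.ofReal ((|a| ^ m / m.factorial) * (2 * Real.pi)) := by
      intro m
      have hbd : ∀ u : ℝ, (‖(a ^ m / m.factorial) * (Real.cos u ^ m * Real.cos (n * u))‖₊ : ENNReal)
          ≤ ENNReal.ofReal (|a| ^ m / m.factorial) := by
        intro u
        rw [← enorm_eq_nnnorm, ← ofReal_norm]
        apply ENNReal.ofReal_le_ofReal
        rw [norm_mul, norm_mul, norm_pow]
        calc ‖a ^ m / (m.factorial:ℝ)‖ * (‖Real.cos u‖ ^ m * ‖Real.cos (n * u)‖)
            ≤ ‖a ^ m / (m.factorial:ℝ)‖ * (1 ^ m * 1) := by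
              gcongr
              · exact Real.abs_cos_le_one u
              · exact Real.abs_cos_le_one _
          _ = |a| ^ m / m.factorial := by
              rw [norm_div, norm_pow]
              simp [abs_of_nonneg (Nat.cast_nonneg m.factorial : (0:ℝ) ≤ m.factorial)]
      calc (∫⁻ u in Set.Ioc (0:ℝ) (2 * Real.pi),
            ‖(a ^ m / m.factorial) * (Real.cos u ^ m * Real.cos (n * u))‖₊)
          ≤ ∫⁻ _ in Set.Ioc (0:ℝ) (2 * Real.pi), ENNReal.ofReal (|a| ^ m / m.factorial) :=
            MeasureTheory.lintegral_mono fun u => hbd u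
        _ = ENNReal.ofReal ((|a| ^ m / m.factorial) * (2 * Real.pi)) := by
            rw [MeasureTheory.setLIntegral_const, Real.volume_Ioc, sub_zero,
              ← ENNReal.ofReal_mul (by positivity)]
    have hsum : Summable (fun m : ℕ => (|a| ^ m / m.factorial) * (2 * Real.pi)) :=
      (Real.summable_pow_div_factorial |a|).mul_right _
    refine ne_top_of_le_ne_top (ENNReal.ofReal_ne_top
      (r := ∑' m : ℕ, (|a| ^ m / m.factorial) * (2 * Real.pi))) ?_
    calc (∑' m : ℕ, ∫⁻ u in Set.Ioc (0:ℝ) (2 * Real.pi),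
          ‖(a ^ m / m.factorial) * (Real.cos u ^ m * Real.cos (n * u))‖₊)
        ≤ ∑' m : ℕ, ENNReal.ofReal ((|a| ^ m / m.factorial) * (2 * Real.pi)) :=
          ENNReal.tsum_le_tsum hb
      _ = ENNReal.ofReal (∑' m : ℕ, (|a| ^ m / m.factorial) * (2 * Real.pi)) :=
          (ENNReal.ofReal_tsum_of_nonneg (fun m => by positivity) hsum).symm

lemma Afun_eq (n : ℕ) (a : ℝ) :
    Afun n a = 2 * Real.pi *
      ∑' k : ℕ, (a / 2) ^ (2 * k + n) / ((k.factorial : ℝ) * ((k + n).factorial : ℝ)) := by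
  rw [Afun, Afun_swap]
  set g : ℕ → ℝ := fun m => (a ^ m / m.factorial) *
    ∫ u in (0:ℝ)..(2 * Real.pi), Real.cos u ^ m * Real.cos (n * u) with hg
  have hinj : Function.Injective (fun k : ℕ => 2 * k + n) := fun x y h => by simp only at h; omega
  have hsupp : Function.support g ⊆ Set.range (fun k : ℕ => 2 * k + n) := by
    intro m hm
    by_contra hc
    apply hm
    have : ∀ k, m ≠ 2 * k + n := fun k hk => hc ⟨k, hk.symm⟩
    show a ^ m / m.factorial *
      (∫ u in (0:ℝ)..(2 * Real.pi), Real.cos u ^ m * Real.cos (n * u)) = 0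
    rw [cInt_zero m n this]
    simp
  rw [← hinj.tsum_eq hsupp]
  rw [← tsum_mul_left]
  refine tsum_congr fun k => ?_
  simp only [hg]
  rw [cInt_eq n k]
  have hfac : ((2 * k + n).choose k : ℝ) * (k.factorial : ℝ) * ((k + n).factorial : ℝ)
      = ((2 * k + n).factorial : ℝ) := by
    have := Nat.add_choose_mul_factorial_mul_factorial (k + n) k
    have h2 : k + n + k = 2 * k + n := by omega
    rw [h2] at this
    have h3 : (2 * k + n).choose k * (k + n).factorial * k.factorial = (2 * k + n).factorial := this
    exact_mod_cast by push_cast [← h3]; ring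
  have hne1 : ((2 * k + n).factorial : ℝ) ≠ 0 := Nat.cast_ne_zero.mpr (Nat.factorial_ne_zero _)
  have hne2 : (k.factorial : ℝ) ≠ 0 := Nat.cast_ne_zero.mpr (Nat.factorial_ne_zero _)
  have hne3 : ((k + n).factorial : ℝ) ≠ 0 := Nat.cast_ne_zero.mpr (Nat.factorial_ne_zero _)
  rw [div_pow]
  field_simp
  rw [← hfac]
  ring

set_option maxHeartbeats 1600000 in
/-- **Lemma D.1 of the paper (with the uniform error bound made explicit).**
(i) `A_n(a) = 2π Σₖ (a/2)^{2k+n}/(k!(k+n)!)`, i.e. `A_n(a) = 2π I_n(a)` with `I_n` the modified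
Bessel function; (ii) for `n ≥ 1` and `0 ≤ a ≤ √n`,
`(2π/n!)(a/2)^n ≤ A_n(a) ≤ (2π/n!)(a/2)^n (1 + a²/(2n))`. -/
theorem Afun_bessel_expansion_and_bounds :
    (∀ (n : ℕ) (a : ℝ),
      Afun n a = 2 * Real.pi *
        ∑' k : ℕ, (a / 2) ^ (2 * k + n) / ((k.factorial : ℝ) * ((k + n).factorial : ℝ))) ∧
    (∀ n : ℕ, 1 ≤ n → ∀ a : ℝ, 0 ≤ a → a ≤ Real.sqrt n →
      (2 * Real.pi / (n.factorial : ℝ)) * (a / 2) ^ n ≤ Afun n a ∧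
      Afun n a ≤ (2 * Real.pi / (n.factorial : ℝ)) * (a / 2) ^ n * (1 + a ^ 2 / (2 * n))) := by
  refine ⟨Afun_eq, fun n hn a ha hasq => ?_⟩
  rw [Afun_eq]
  have hπ : (0:ℝ) < 2 * Real.pi := by positivity
  set t : ℕ → ℝ := fun k => (a / 2) ^ (2 * k + n) / ((k.factorial : ℝ) * ((k + n).factorial : ℝ))
    with hts
  have ht_nonneg : ∀ k, 0 ≤ t k := fun k => by
    have h1 : (0:ℝ) ≤ (a/2) ^ (2*k+n) := by positivity
    have h2 : (0:ℝ) < (k.factorial : ℝ) * ((k+n).factorial : ℝ) := by positivity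
    exact div_nonneg h1 h2.le
  set x : ℝ := a ^ 2 / (4 * ((n:ℝ) + 1)) with hx
  have hn1 : (1:ℝ) ≤ n := by exact_mod_cast hn
  have ha2 : a ^ 2 ≤ n := by
    have h := Real.sq_sqrt (by positivity : (0:ℝ) ≤ (n:ℝ))
    nlinarith [Real.sqrt_nonneg (n:ℝ)]
  have hx0 : 0 ≤ x := by positivity
  have hx1 : x ≤ 1 / 4 := by
    rw [hx, div_le_div_iff₀ (by positivity) (by norm_num)]
    nlinarith
  have hxa : x * (4 * ((n:ℝ) + 1)) = a ^ 2 := by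
    rw [hx]; field_simp
  have hbd : ∀ k, t k ≤ ((a/2)^n / (n.factorial : ℝ)) * (x ^ k / (k.factorial : ℝ)) := by
    intro k
    have hfac : (n.factorial : ℝ) * ((n:ℝ) + 1) ^ k ≤ ((k + n).factorial : ℝ) := by
      have h := Nat.factorial_mul_pow_le_factorial (m := n) (n := k)
      have h2 : n + k = k + n := by omega
      rw [h2] at h
      exact_mod_cast h
    have hsplit : t k = ((a/2)^n * (a^2/4) ^ k) /
        ((k.factorial : ℝ) * ((k + n).factorial : ℝ)) := by
      have h3 : (a/2) ^ (2*k+n) = (a/2)^n * (a^2/4)^k := by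
        rw [pow_add, pow_mul]
        ring_nf
      simp only [hts]
      rw [h3]
    have heq : ((a/2)^n / (n.factorial : ℝ)) * (x ^ k / (k.factorial : ℝ))
        = ((a/2)^n * (a^2/4) ^ k) /
          ((k.factorial : ℝ) * ((n.factorial : ℝ) * ((n:ℝ)+1) ^ k)) := by
      have hxk : x ^ k = (a^2/4)^k / (((n:ℝ)+1))^k := by
        rw [hx, div_pow, div_pow, mul_pow, div_div]
      rw [hxk]
      ring
    rw [hsplit, heq]
    have h1 : (0:ℝ) ≤ (a/2)^n * (a^2/4)^k := by positivity
    gcongr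
  have hsum_b : Summable (fun k : ℕ => ((a/2)^n / (n.factorial : ℝ)) * (x ^ k / (k.factorial : ℝ))) :=
    (Real.summable_pow_div_factorial x).mul_left _
  have hsum_t : Summable t := Summable.of_nonneg_of_le ht_nonneg hbd hsum_b
  constructor
  · have h0 : t 0 ≤ ∑' k, t k := Summable.le_tsum hsum_t 0 (fun k _ => ht_nonneg k)
    have ht0 : t 0 = (a/2)^n / (n.factorial : ℝ) := by
      rw [hts]; simp
    have := mul_le_mul_of_nonneg_left h0 hπ.le
    rw [ht0] at this
    calc 2 * Real.pi / (n.factorial : ℝ) * (a/2)^n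
        = 2 * Real.pi * ((a/2)^n / (n.factorial : ℝ)) := by ring
      _ ≤ 2 * Real.pi * ∑' k, t k := this
  · have hT : (∑' k, t k) ≤ ((a/2)^n / (n.factorial : ℝ)) * Real.exp x := by
      calc (∑' k, t k) ≤ ∑' k, ((a/2)^n / (n.factorial : ℝ)) * (x ^ k / (k.factorial : ℝ)) :=
            Summable.tsum_le_tsum hbd hsum_t hsum_b
        _ = ((a/2)^n / (n.factorial : ℝ)) * ∑' k, (x ^ k / (k.factorial : ℝ)) := tsum_mul_left
        _ = ((a/2)^n / (n.factorial : ℝ)) * Real.exp x := by rw [← real_exp_tsum]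
    have hexp : Real.exp x ≤ 1 + a ^ 2 / (2 * n) := by
      have hb2 := Real.exp_bound' hx0 (le_trans hx1 (by norm_num)) (n := 2) (by norm_num)
      have hs : (∑ m ∈ Finset.range 2, x ^ m / m.factorial) = 1 + x := by
        simp [Finset.sum_range_succ]
      rw [hs] at hb2
      norm_num at hb2
      have hfin : 1 + x + x ^ 2 * 3 / (2 * 2) ≤ 1 + a ^ 2 / (2 * n) := by
        have hgoal : x + x ^ 2 * 3 / 4 ≤ a ^ 2 / (2 * n) := by
          rw [le_div_iff₀ (by positivity : (0:ℝ) < 2 * n), ← hxa]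
          nlinarith [mul_nonneg (mul_nonneg (by positivity : (0:ℝ) ≤ (n:ℝ)) hx0)
            (sub_nonneg.mpr hx1), mul_nonneg hx0 (sub_nonneg.mpr hx1)]
        linarith
      calc Real.exp x ≤ 1 + x + x ^ 2 * 3 / (2 * 2) := by linarith [hb2]
        _ ≤ 1 + a ^ 2 / (2 * n) := hfin
    have hpos : (0:ℝ) ≤ (a/2)^n / (n.factorial : ℝ) := by positivity
    calc 2 * Real.pi * ∑' k, t k
        ≤ 2 * Real.pi * (((a/2)^n / (n.factorial : ℝ)) * Real.exp x) := by
          exact mul_le_mul_of_nonneg_left hT hπ.le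
      _ ≤ 2 * Real.pi * (((a/2)^n / (n.factorial : ℝ)) * (1 + a ^ 2 / (2 * n))) := by
          have := mul_le_mul_of_nonneg_left hexp hpos
          exact mul_le_mul_of_nonneg_left this hπ.le
      _ = 2 * Real.pi / (n.factorial : ℝ) * (a/2)^n * (1 + a ^ 2 / (2 * n)) := by ring

end
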